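/- Let G be a finite simple graph with vertex s, and let S ⊆ ℕ be a finite set. Let G⁺ be obtained from G by adding a new vertex v adjacent to s and, for each m ∈ S, adding a fresh disjoint copy of the tree t(m) with v joined by an edge to its root. Then g(G⁺, v) = mex(S ∪ {g(G,s)}). -/

import Mathlib

noncomputable def mex (s : Finset ℕ) : ℕ := sInf {n : ℕ | n ∉ s}

noncomputable def geo {V : Type} [DecidableEq V] (G : SimpleGraph V) [DecidableRel G.Adj]
    (A : Finset V) (s : V) : ℕ :=
  if h : s ∈ A then
    mex (((A.erase s).filter (fun v => G.Adj s v)).image (fun v => geo G (A.erase s) v))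
  else 0
termination_by A.card
decreasing_by
  simp_wf
  exact Finset.card_erase_lt_of_mem h

/-- Parent-child relation of the binomial trees: `T` is a child of `S` iff `T` is obtained
from `S` by inserting a new element larger than everything in `S`.  The induced graph on
the powerset of `range m` is (an isomorphic copy of) the recursively defined tree `t(m)`,
rooted at `∅`, whose root is joined to the roots of copies of `t(0), …, t(m−1)`. -/
def treeRel (S T : Finset ℕ) : Prop :=
  ∃ k ∈ T, k ∉ S ∧ (∀ j ∈ S, j < k) ∧ T = insert k S

instance : DecidableRel treeRel := fun S T => by
  unfold treeRel; infer_instance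

/-- Vertices of the augmented graph `G⁺`: the original vertices of `G`, the new vertex `v`
(the `Unit` summand), and vertices `(m, T)` of a copy of the tree `t(m)` for each `m`. -/
abbrev PlusV (V : Type) : Type := V ⊕ Unit ⊕ (ℕ × Finset ℕ)

/-- Base edge relation of `G⁺`: edges of `G`; an edge from `s` to the new vertex `v`;
edges from `v` to the root `(m, ∅)` of each tree copy; and the tree edges within a copy. -/
def plusRel {V : Type} (G : SimpleGraph V) (s : V) : PlusV V → PlusV V → Prop
  | Sum.inl u, Sum.inl w => G.Adj u w
  | Sum.inl u, Sum.inr (Sum.inl _) => u = s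
  | Sum.inr (Sum.inl _), Sum.inr (Sum.inr (_, T)) => T = ∅
  | Sum.inr (Sum.inr (m, T)), Sum.inr (Sum.inr (m', T')) => m = m' ∧ treeRel T T'
  | _, _ => False

instance {V : Type} [DecidableEq V] (G : SimpleGraph V) [DecidableRel G.Adj] (s : V) :
    DecidableRel (plusRel G s) := fun u w => by
  rcases u with u | u | ⟨m, T⟩ <;> rcases w with w | w | ⟨m', T'⟩ <;>
    simp only [plusRel] <;> infer_instance

/-- The augmented graph `G⁺` (as a graph on the ambient vertex type `PlusV V`). -/
def plusGraph {V : Type} (G : SimpleGraph V) (s : V) : SimpleGraph (PlusV V) where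
  Adj u w := u ≠ w ∧ (plusRel G s u w ∨ plusRel G s w u)
  symm := ⟨fun u w h => ⟨h.1.symm, h.2.symm⟩⟩
  loopless := ⟨fun u h => h.1 rfl⟩

instance {V : Type} [DecidableEq V] (G : SimpleGraph V) [DecidableRel G.Adj] (s : V) :
    DecidableRel (plusGraph G s).Adj := fun u w =>
  inferInstanceAs (Decidable (u ≠ w ∧ (plusRel G s u w ∨ plusRel G s w u)))

/-- The vertex set of `G⁺`: all vertices of `G`, the new vertex `v`, and for each `m ∈ S`
a fresh disjoint copy of the tree `t(m)` (whose vertex set is the powerset of `range m`). -/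
def plusVerts (V : Type) [Fintype V] [DecidableEq V] (S : Finset ℕ) : Finset (PlusV V) :=
  (Finset.univ.image (Sum.inl : V → PlusV V)) ∪ {Sum.inr (Sum.inl ())} ∪
    S.biUnion (fun m => ((Finset.range m).powerset).image
      (fun T => (Sum.inr (Sum.inr (m, T)) : PlusV V)))


/-! ### Auxiliary lemmas -/

lemma mex_range (c : ℕ) : mex (Finset.range c) = c := by
  unfold mex
  have h : {n : ℕ | n ∉ Finset.range c} = {n : ℕ | c ≤ n} := by
    ext n; simp [Finset.mem_range]
  rw [h]
  have hne : {n : ℕ | c ≤ n}.Nonempty := ⟨c, by simp⟩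
  exact le_antisymm (Nat.sInf_le (by simp)) (Nat.sInf_mem hne)

lemma geo_congr {V W : Type} [DecidableEq V] [DecidableEq W]
    (G : SimpleGraph V) [DecidableRel G.Adj]
    (G' : SimpleGraph W) [DecidableRel G'.Adj]
    (f : V → W) (hf : Function.Injective f) :
    ∀ (A : Finset W) (B : Finset V) (u : V),
      u ∈ B → (∀ x ∈ B, f x ∈ A) →
      (∀ x ∈ B, ∀ w ∈ A, G'.Adj (f x) w → ∃ y ∈ B, w = f y ∧ G.Adj x y) →
      (∀ x ∈ B, ∀ y ∈ B, G.Adj x y → G'.Adj (f x) (f y)) →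
      geo G' A (f u) = geo G B u := by
  intro A
  induction A using Finset.strongInduction with
  | _ A ih =>
    intro B u hu hBA h3 h4
    have hfu : f u ∈ A := hBA u hu
    have key : ∀ y ∈ B.erase u, geo G' (A.erase (f u)) (f y) = geo G (B.erase u) y := by
      intro y hy
      apply ih (A.erase (f u)) (Finset.erase_ssubset hfu) _ y hy
      · intro x hx
        exact Finset.mem_erase.2 ⟨fun h => (Finset.mem_erase.1 hx).1 (hf h),
          hBA x (Finset.mem_of_mem_erase hx)⟩
      · intro x hx w hw hadj
        obtain ⟨y', hy', rfl, hxy'⟩ := h3 x (Finset.mem_of_mem_erase hx) w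
          (Finset.mem_of_mem_erase hw) hadj
        exact ⟨y', Finset.mem_erase.2 ⟨fun h => (Finset.mem_erase.1 hw).1 (by rw [h]), hy'⟩,
          rfl, hxy'⟩
      · intro x hx y' hy' h
        exact h4 x (Finset.mem_of_mem_erase hx) y' (Finset.mem_of_mem_erase hy') h
    rw [geo, geo, dif_pos hfu, dif_pos hu]
    congr 1
    ext n
    simp only [Finset.mem_image, Finset.mem_filter]
    constructor
    · rintro ⟨w, ⟨hwA, hadj⟩, rfl⟩
      have hwA' := Finset.mem_of_mem_erase hwA
      have hwne : w ≠ f u := Finset.ne_of_mem_erase hwA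
      obtain ⟨y, hyB, rfl, hxy⟩ := h3 u hu w hwA' hadj
      have hyu : y ≠ u := fun h => hwne (by rw [h])
      have hyB' : y ∈ B.erase u := Finset.mem_erase.2 ⟨hyu, hyB⟩
      exact ⟨y, ⟨hyB', hxy⟩, (key y hyB').symm⟩
    · rintro ⟨y, ⟨hyB, hxy⟩, rfl⟩
      have hyu := (Finset.mem_erase.1 hyB).1
      have hfy : f y ∈ A.erase (f u) :=
        Finset.mem_erase.2 ⟨fun h => hyu (hf h), hBA y (Finset.mem_of_mem_erase hyB)⟩
      exact ⟨f y, ⟨hfy, h4 u hu y (Finset.mem_of_mem_erase hyB) hxy⟩, key y hyB⟩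

/-- The abstract tree graph on `Finset ℕ` given by the parent-child relation. -/
def treeG : SimpleGraph (Finset ℕ) where
  Adj T T' := treeRel T T' ∨ treeRel T' T
  symm := ⟨fun T T' h => h.symm⟩
  loopless := ⟨fun T h => by
    rcases h with ⟨k, hk, hk', _⟩ | ⟨k, hk, hk', _⟩ <;> exact hk' hk⟩

instance : DecidableRel treeG.Adj := fun T T' =>
  inferInstanceAs (Decidable (treeRel T T' ∨ treeRel T' T))

lemma tree_geo : ∀ (A : Finset (Finset ℕ)) (n b : ℕ) (T : Finset ℕ),
    T ∈ A → (∀ X ∈ A, X ⊆ Finset.range n) →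
    (∀ k, b ≤ k ↔ ∀ j ∈ T, j < k) →
    (∀ T', treeRel T' T → T' ∉ A) →
    (∀ T', T' ⊆ Finset.range n → T ⊆ T' → (∀ j ∈ T', j ∉ T → ∀ i ∈ T, i < j) → T' ∈ A) →
    geo treeG A T = n - b := by
  intro A
  induction A using Finset.strongInduction with
  | _ A ih =>
    intro n b T hT hA hb hpar hdesc
    have hbT : ∀ j ∈ T, j < b := (hb b).1 le_rfl
    have hchild : ∀ k, b ≤ k → k < n → insert k T ∈ A ∧ insert k T ≠ T := by
      intro k hbk hkn
      have hkT : k ∉ T := fun h => absurd (lt_of_lt_of_le (hbT k h) hbk) (lt_irrefl k)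
      have hlt : ∀ j ∈ T, j < k := (hb k).1 hbk
      have hsub : insert k T ⊆ Finset.range n := by
        intro j hj
        rcases Finset.mem_insert.1 hj with rfl | hj'
        · exact Finset.mem_range.2 hkn
        · exact hA T hT hj'
      refine ⟨hdesc _ hsub (Finset.subset_insert _ _) ?_, ?_⟩
      · intro j hj hjT
        rcases Finset.mem_insert.1 hj with rfl | hj'
        · exact hlt
        · exact absurd hj' hjT
      · intro h; exact hkT (h ▸ Finset.mem_insert_self k T)
    have hNS : (A.erase T).filter (fun w => treeG.Adj T w)
        = (Finset.Ico b n).image (fun k => insert k T) := by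
      ext w
      simp only [Finset.mem_filter, Finset.mem_erase, Finset.mem_image, Finset.mem_Ico]
      constructor
      · rintro ⟨⟨hne, hwA⟩, hadj⟩
        rcases hadj with ⟨k, hkw, hkT, hlt, rfl⟩ | hrev
        · exact ⟨k, ⟨(hb k).2 hlt, Finset.mem_range.1 (hA _ hwA hkw)⟩, rfl⟩
        · exact absurd hwA (hpar w hrev)
      · rintro ⟨k, ⟨hbk, hkn⟩, rfl⟩
        obtain ⟨hmem, hne⟩ := hchild k hbk hkn
        have hkT : k ∉ T := fun h => absurd (lt_of_lt_of_le (hbT k h) hbk) (lt_irrefl k)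
        exact ⟨⟨hne, hmem⟩, Or.inl ⟨k, Finset.mem_insert_self k T, hkT, (hb k).1 hbk, rfl⟩⟩
    rw [geo, dif_pos hT, hNS, Finset.image_image]
    have himg : (Finset.Ico b n).image ((fun v => geo treeG (A.erase T) v) ∘ fun k => insert k T)
        = (Finset.Ico b n).image (fun k => n - (k + 1)) := by
      apply Finset.image_congr
      intro k hk
      rw [Finset.mem_coe, Finset.mem_Ico] at hk
      obtain ⟨hbk, hkn⟩ := hk
      obtain ⟨hmem, hne⟩ := hchild k hbk hkn
      have hkT : k ∉ T := fun h => absurd (lt_of_lt_of_le (hbT k h) hbk) (lt_irrefl k)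
      have hlt : ∀ j ∈ T, j < k := (hb k).1 hbk
      simp only [Function.comp]
      apply ih (A.erase T) (Finset.erase_ssubset hT) n (k + 1) (insert k T)
      · exact Finset.mem_erase.2 ⟨hne, hmem⟩
      · intro X hX; exact hA X (Finset.mem_of_mem_erase hX)
      · intro k'
        constructor
        · intro hk' j hj
          rcases Finset.mem_insert.1 hj with rfl | hj'
          · omega
          · have := hlt j hj'; omega
        · intro h; have := h k (Finset.mem_insert_self k T); omega
      · intro T'' htr
        obtain ⟨j, hjmem, hjT'', hlt'', heq⟩ := htr
        have hjk : j = k := by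
          by_contra hne'
          rcases Finset.mem_insert.1 hjmem with rfl | hj'
          · exact hne' rfl
          · have hjk' : j < k := hlt j hj'
            have hkmem : k ∈ insert j T'' := heq ▸ Finset.mem_insert_self k T
            rcases Finset.mem_insert.1 hkmem with rfl | hk''
            · omega
            · have := hlt'' k hk''; omega
        subst hjk
        have hTT : T'' = T := by
          apply Finset.Subset.antisymm
          · intro x hx
            have : x ∈ insert j T := heq ▸ Finset.mem_insert_of_mem hx
            rcases Finset.mem_insert.1 this with rfl | hx'
            · exact absurd hx hjT''
            · exact hx'
          · intro x hx
            have : x ∈ insert j T'' := heq.symm ▸ Finset.mem_insert_of_mem hx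
            rcases Finset.mem_insert.1 this with rfl | hx'
            · exact absurd hx hkT
            · exact hx'
        rw [hTT]
        exact Finset.notMem_erase T A
      · intro T' hsub' hsub2 hcond
        have hkT' : k ∈ T' := hsub2 (Finset.mem_insert_self k T)
        refine Finset.mem_erase.2 ⟨fun h => hkT (h ▸ hkT'), ?_⟩
        apply hdesc T' hsub'
        · exact (Finset.subset_insert k T).trans hsub2
        · intro j hj hjT i hi
          by_cases hjk : j = k
          · subst hjk; exact hlt i hi
          · have hjins : j ∉ insert k T := by
              intro h
              rcases Finset.mem_insert.1 h with rfl | h'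
              · exact hjk rfl
              · exact hjT h'
            exact hcond j hj hjins i (Finset.mem_insert_of_mem hi)
    rw [himg]
    have hrng : (Finset.Ico b n).image (fun k => n - (k + 1)) = Finset.range (n - b) := by
      ext x
      simp only [Finset.mem_image, Finset.mem_Ico, Finset.mem_range]
      constructor
      · rintro ⟨k, ⟨h1, h2⟩, rfl⟩; omega
      · intro hx; exact ⟨n - 1 - x, by omega, by omega⟩
    rw [hrng, mex_range]

lemma plusGraph_adj {V : Type} (G : SimpleGraph V) (s : V) (u w : PlusV V) :
    (plusGraph G s).Adj u w ↔ u ≠ w ∧ (plusRel G s u w ∨ plusRel G s w u) := Iff.rfl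

lemma mem_pv_inl {V : Type} [Fintype V] [DecidableEq V] (S : Finset ℕ) (u : V) :
    (Sum.inl u : PlusV V) ∈ plusVerts V S := by
  simp [plusVerts]

lemma mem_pv_v {V : Type} [Fintype V] [DecidableEq V] (S : Finset ℕ) :
    (Sum.inr (Sum.inl ()) : PlusV V) ∈ plusVerts V S := by
  simp [plusVerts]

lemma mem_pv_tree {V : Type} [Fintype V] [DecidableEq V] (S : Finset ℕ) (m : ℕ) (T : Finset ℕ) :
    (Sum.inr (Sum.inr (m, T)) : PlusV V) ∈ plusVerts V S ↔ m ∈ S ∧ T ⊆ Finset.range m := by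
  simp only [plusVerts, Finset.mem_union, Finset.mem_image, Finset.mem_singleton,
    Finset.mem_biUnion, Finset.mem_powerset, Finset.mem_univ, true_and]
  constructor
  · rintro ((⟨u, hu⟩ | h) | ⟨m', hm', T', hT', heq⟩)
    · exact absurd hu (by simp)
    · exact absurd h (by simp)
    · obtain ⟨h1, h2⟩ : m' = m ∧ T' = T := by
        constructor <;> · injection heq with h; injection h with h; injection h with a b
      subst h1; subst h2
      exact ⟨hm', hT'⟩
  · rintro ⟨hm, hT⟩
    exact Or.inr ⟨m, hm, T, hT, rfl⟩

/-- let `G⁺` be obtained from `G` by adding a new vertex `v` adjacent to `s`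
and, for each `m ∈ S`, a fresh disjoint copy of the tree `t(m)` with `v` joined to its
root.  Then `g(G⁺, v) = mex (S ∪ {g(G,s)})`. -/
theorem stmt12 {V : Type} [Fintype V] [DecidableEq V]
    (G : SimpleGraph V) [DecidableRel G.Adj] (s : V) (S : Finset ℕ) :
    geo (plusGraph G s) (plusVerts V S) (Sum.inr (Sum.inl ())) =
      mex (insert (geo G Finset.univ s) S) := by
  classical
  have hvA : (Sum.inr (Sum.inl ()) : PlusV V) ∈ plusVerts V S := mem_pv_v S
  -- the vertex set after removing the new vertex v
  -- Claim A : the Grundy value at `inl s` equals the value in `G`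
  have claimA : geo (plusGraph G s) ((plusVerts V S).erase (Sum.inr (Sum.inl ())))
      (Sum.inl s) = geo G Finset.univ s := by
    apply geo_congr G (plusGraph G s) Sum.inl Sum.inl_injective _ Finset.univ s
      (Finset.mem_univ s)
    · intro x _
      exact Finset.mem_erase.2 ⟨by simp, mem_pv_inl S x⟩
    · intro x _ w hw hadj
      obtain ⟨hne, hrel⟩ := hadj
      rcases w with y | y | ⟨m, T⟩
      · rcases hrel with h | h
        · simp only [plusRel] at h
          exact ⟨y, Finset.mem_univ y, rfl, h⟩
        · simp only [plusRel] at h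
          exact ⟨y, Finset.mem_univ y, rfl, h.symm⟩
      · cases y
        exact absurd rfl (Finset.mem_erase.1 hw).1
      · rcases hrel with h | h <;> simp only [plusRel] at h
    · intro x _ y _ h
      exact ⟨fun hh => G.ne_of_adj h (Sum.inl.inj hh), Or.inl h⟩
  -- Claim B : the Grundy value at the root of the copy of `t(m)` equals `m`
  have claimB : ∀ m ∈ S, geo (plusGraph G s) ((plusVerts V S).erase (Sum.inr (Sum.inl ())))
      (Sum.inr (Sum.inr (m, (∅ : Finset ℕ)))) = m := by
    intro m hm
    have hinj : Function.Injective
        (fun T : Finset ℕ => (Sum.inr (Sum.inr (m, T)) : PlusV V)) := by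
      intro a b h; simpa using h
    have htrans := geo_congr treeG (plusGraph G s)
      (fun T : Finset ℕ => (Sum.inr (Sum.inr (m, T)) : PlusV V)) hinj
      ((plusVerts V S).erase (Sum.inr (Sum.inl ()))) ((Finset.range m).powerset) ∅
      (Finset.empty_mem_powerset _) ?_ ?_ ?_
    · rw [htrans]
      have := tree_geo ((Finset.range m).powerset) m 0 ∅ (Finset.empty_mem_powerset _)
        (fun X hX => Finset.mem_powerset.1 hX)
        (fun k => by simp)
        (fun T' h => by
          obtain ⟨k, hk, _⟩ := h
          exact absurd hk (Finset.notMem_empty k))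
        (fun T' h1 _ _ => Finset.mem_powerset.2 h1)
      simpa using this
    · intro T hT
      exact Finset.mem_erase.2 ⟨by simp, (mem_pv_tree S m T).2 ⟨hm, Finset.mem_powerset.1 hT⟩⟩
    · intro T _ w hw hadj
      obtain ⟨hne, hrel⟩ := hadj
      rcases w with y | y | ⟨m', T'⟩
      · rcases hrel with h | h <;> simp only [plusRel] at h
      · cases y
        exact absurd rfl (Finset.mem_erase.1 hw).1
      · rcases hrel with h | h <;> simp only [plusRel] at h
        · obtain ⟨h1, h2⟩ := h
          subst h1
          have hmem := (mem_pv_tree S _ T').1 (Finset.mem_of_mem_erase hw)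
          exact ⟨T', Finset.mem_powerset.2 hmem.2, rfl, Or.inl h2⟩
        · obtain ⟨h1, h2⟩ := h
          subst h1
          have hmem := (mem_pv_tree S _ T').1 (Finset.mem_of_mem_erase hw)
          exact ⟨T', Finset.mem_powerset.2 hmem.2, rfl, Or.inr h2⟩
    · intro T _ T' _ h
      refine ⟨fun hh => treeG.ne_of_adj h (by simpa using hh), ?_⟩
      rcases h with h | h
      · exact Or.inl ⟨rfl, h⟩
      · exact Or.inr ⟨rfl, h⟩
  -- the set of neighbours of the new vertex `v`
  have hNS : ((plusVerts V S).erase (Sum.inr (Sum.inl ()))).filter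
        (fun w => (plusGraph G s).Adj (Sum.inr (Sum.inl ())) w)
      = insert (Sum.inl s)
          (S.image (fun m => (Sum.inr (Sum.inr (m, (∅ : Finset ℕ))) : PlusV V))) := by
    ext w
    simp only [Finset.mem_filter, Finset.mem_erase, Finset.mem_insert, Finset.mem_image,
      plusGraph_adj]
    rcases w with u | u | ⟨m, T⟩
    · constructor
      · rintro ⟨⟨hne, hmem⟩, hvw, hrel | hrel⟩
        · simp only [plusRel] at hrel
        · simp only [plusRel] at hrel
          subst hrel
          exact Or.inl rfl
      · rintro (heq | ⟨m, hm, heq⟩)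
        · obtain rfl : u = s := Sum.inl.inj heq
          refine ⟨⟨by simp, mem_pv_inl _ _⟩, by simp, Or.inr (by simp [plusRel])⟩
        · exact absurd heq (by simp)
    · cases u
      constructor
      · rintro ⟨⟨hne, _⟩, _⟩
        exact absurd rfl hne
      · rintro (heq | ⟨m, hm, heq⟩)
        · exact absurd heq (by simp)
        · exact absurd heq (by simp)
    · constructor
      · rintro ⟨⟨hne, hmem⟩, hvw, hrel | hrel⟩
        · simp only [plusRel] at hrel
          subst hrel
          exact Or.inr ⟨m, ((mem_pv_tree S m ∅).1 hmem).1, rfl⟩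
        · simp only [plusRel] at hrel
      · rintro (heq | ⟨m', hm', heq⟩)
        · exact absurd heq (by simp)
        · obtain ⟨h1, h2⟩ : m' = m ∧ (∅ : Finset ℕ) = T := by
            injection heq with h
            injection h with h
            injection h with h1 h2
            exact ⟨h1, h2⟩
          subst h1
          subst h2
          refine ⟨⟨by simp, (mem_pv_tree S _ _).2 ⟨hm', by simp⟩⟩, by simp,
            Or.inl (by simp [plusRel])⟩
  rw [geo, dif_pos hvA, hNS, Finset.image_insert, claimA, Finset.image_image]
  have himg : S.image ((fun w => geo (plusGraph G s)
        ((plusVerts V S).erase (Sum.inr (Sum.inl ()))) w) ∘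
        fun m => (Sum.inr (Sum.inr (m, (∅ : Finset ℕ))) : PlusV V)) = S := by
    have h1 := Finset.image_congr (s := S)
      (g := id)
      (f := (fun w => geo (plusGraph G s)
        ((plusVerts V S).erase (Sum.inr (Sum.inl ()))) w) ∘
        fun m => (Sum.inr (Sum.inr (m, (∅ : Finset ℕ))) : PlusV V))
      (fun m hm => claimB m (by simpa using hm))
    rw [h1, Finset.image_id]
  rw [himg]
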